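/- Let n ≥ 2 and suppose the growth function is f(k) = n^k − 1. Then for every d ≥ 1 and μ ≥ 0, the cardinality of the nested Smolyak grid is N(d,μ) = (n−1)^d · Σ_{k=0}^{μ} C(d+k−1, k) · n^k. -/

import Mathlib

lemma aux_sum_choose (d n : ℕ) (hd : 1 ≤ d) :
    ∑ j ∈ Finset.range (n + 1), (d + j - 1).choose j = (d + n).choose n := by
  have h1 : ∀ j, (d + j - 1).choose j = (d + j - 1).choose (d - 1) := by
    intro j
    have : d + j - 1 - j = d - 1 := by omega
    rw [← this, Nat.choose_symm (by omega)]
  simp_rw [h1]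
  have hmap : Finset.Icc (d - 1) (d - 1 + n)
      = (Finset.range (n + 1)).map ⟨fun j => d - 1 + j, add_right_injective _⟩ := by
    ext m
    simp only [Finset.mem_Icc, Finset.mem_map, Finset.mem_range, Function.Embedding.coeFn_mk]
    constructor
    · intro h; exact ⟨m - (d - 1), by omega, by omega⟩
    · rintro ⟨j, hj, rfl⟩; omega
  have h2 := Nat.sum_Icc_choose (d - 1 + n) (d - 1)
  rw [hmap, Finset.sum_map] at h2
  simp only [Function.Embedding.coeFn_mk] at h2
  have h3 : ∀ j, (d - 1 + j).choose (d - 1) = (d + j - 1).choose (d - 1) := by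
    intro j; congr 1; omega
  simp_rw [h3] at h2
  rw [h2]
  have e1 : d - 1 + n + 1 = d + n := by omega
  have e2 : d - 1 + 1 = d + n - n := by omega
  rw [e1, e2, Nat.choose_symm (by omega)]

lemma aux_AT_succ (d n : ℕ) :
    Finset.Nat.antidiagonalTuple (d + 1) n =
      (Finset.HasAntidiagonal.antidiagonal n).biUnion fun p =>
        (Finset.Nat.antidiagonalTuple d p.2).image (Fin.cons (α := fun _ : Fin (d+1) => ℕ) p.1) := by
  ext x
  simp only [Finset.Nat.mem_antidiagonalTuple, Finset.mem_biUnion, Finset.mem_image,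
    Finset.HasAntidiagonal.mem_antidiagonal, Prod.exists]
  constructor
  · rintro rfl
    exact ⟨x 0, ∑ i : Fin d, x (Fin.succ i), (Fin.sum_univ_succ x).symm, Fin.tail x,
      rfl, Fin.cons_self_tail x⟩
  · rintro ⟨a, b, hab, y, hy, rfl⟩
    rw [Fin.sum_univ_succ]
    simp only [Fin.cons_zero, Fin.cons_succ]
    omega

lemma aux_card_AT : ∀ d n : ℕ, (Finset.Nat.antidiagonalTuple d n).card = (d + n - 1).choose n := by
  intro d
  induction d with
  | zero =>
    intro n
    cases n with
    | zero => simp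
    | succ n =>
      simp only [Finset.Nat.antidiagonalTuple_zero_succ, Finset.card_empty]
      rw [Nat.choose_eq_zero_of_lt (by omega)]
  | succ d ih =>
    intro n
    rw [aux_AT_succ, Finset.card_biUnion]
    · have hc : ∀ p : ℕ × ℕ, ((Finset.Nat.antidiagonalTuple d p.2).image (Fin.cons (α := fun _ : Fin (d+1) => ℕ) p.1)).card
          = (d + p.2 - 1).choose p.2 := fun p => by
        rw [Finset.card_image_of_injective _
          (Fin.cons_right_injective (α := fun _ : Fin (d+1) => ℕ) p.1), ih]
      rw [Finset.sum_congr rfl fun p _ => hc p]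
      rw [Finset.Nat.sum_antidiagonal_eq_sum_range_succ_mk]
      simp only
      have hre : ∑ i ∈ Finset.range (n + 1), (d + (n - i) - 1).choose (n - i)
          = ∑ j ∈ Finset.range (n + 1), (d + j - 1).choose j := by
        rw [← Finset.sum_range_reflect]
        refine Finset.sum_congr rfl fun i hi => ?_
        simp only [Finset.mem_range] at hi
        congr 1 <;> omega
      rw [hre]
      rcases Nat.eq_zero_or_pos d with rfl | hd
      · rw [Finset.sum_eq_single 0]
        · simp
        · intro b hb hb0
          exact Nat.choose_eq_zero_of_lt (by omega)
        · simp
      · rw [aux_sum_choose d n hd]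
        congr 1
        omega
    · intro p hp q hq hpq
      simp only [Finset.mem_coe, Finset.HasAntidiagonal.mem_antidiagonal] at hp hq
      rw [Function.onFun, Finset.disjoint_left]
      rintro x hx hx'
      simp only [Finset.mem_image] at hx hx'
      obtain ⟨y, hy, rfl⟩ := hx
      obtain ⟨z, hz, hzx⟩ := hx'
      have h0 : q.1 = p.1 := by
        have := congrFun hzx 0
        simpa using this
      apply hpq
      ext
      · exact h0.symm
      · omega


/-- Multi-indices `i : Fin d → ℕ` with `i k ≥ 1` for all `k` and `∑ k, i k = d + μ`. -/
def smolyakIndices (d μ : ℕ) : Finset (Fin d → ℕ) :=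
  (Fintype.piFinset fun _ => Finset.Icc 1 (d + μ)).filter fun i => ∑ k, i k = d + μ

/-- The Smolyak grid `Γ(d, μ)` based on the node sets `S`. -/
noncomputable def smolyakGrid (S : ℕ → Finset ℝ) (d μ : ℕ) : Finset (Fin d → ℝ) :=
  (smolyakIndices d μ).biUnion fun i => Fintype.piFinset fun k => S (i k)

/-- `N(d, μ)`: the number of nodes in the Smolyak grid. -/
noncomputable def smolyakCard (S : ℕ → Finset ℝ) (d μ : ℕ) : ℕ :=
  (smolyakGrid S d μ).card

/-- `T 0 = ∅`, `T j = S j` for `j ≥ 1`. -/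
def Tset (S : ℕ → Finset ℝ) : ℕ → Finset ℝ
  | 0 => ∅
  | (j + 1) => S (j + 1)

/-- "New points" at level `j`. -/
noncomputable def Dset (S : ℕ → Finset ℝ) (j : ℕ) : Finset ℝ := Tset S j \ Tset S (j - 1)

lemma Tset_eq {S : ℕ → Finset ℝ} {j : ℕ} (hj : 1 ≤ j) : Tset S j = S j := by
  cases j with
  | zero => omega
  | succ j => rfl

lemma Tset_mono {S : ℕ → Finset ℝ} (hS : ∀ k, 1 ≤ k → S k ⊆ S (k + 1)) :
    Monotone (Tset S) := by
  apply monotone_nat_of_le_succ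
  intro a
  cases a with
  | zero => exact Finset.empty_subset _
  | succ a => exact hS (a + 1) (by omega)

lemma exists_level {S : ℕ → Finset ℝ} {x : ℝ} {j : ℕ} (hx : x ∈ Tset S j) :
    ∃ m, 1 ≤ m ∧ m ≤ j ∧ x ∈ Dset S m := by
  have hex : ∃ m, x ∈ Tset S m := ⟨j, hx⟩
  refine ⟨Nat.find hex, ?_, Nat.find_min' hex hx, ?_⟩
  · by_contra h
    have h0 : Nat.find hex = 0 := by omega
    have := Nat.find_spec hex
    rw [h0] at this
    simp [Tset] at this
  · refine Finset.mem_sdiff.mpr ⟨Nat.find_spec hex, fun hc => ?_⟩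
    rcases Nat.eq_zero_or_pos (Nat.find hex) with h0 | h0
    · rw [h0] at hc
      simp only [Nat.zero_sub] at hc
      simp [Tset] at hc
    · exact Nat.find_min hex (show Nat.find hex - 1 < Nat.find hex by omega) hc

lemma Dset_subset {S : ℕ → Finset ℝ} (j : ℕ) : Dset S j ⊆ Tset S j :=
  Finset.sdiff_subset

lemma Dset_disjoint {S : ℕ → Finset ℝ} (hS : ∀ k, 1 ≤ k → S k ⊆ S (k + 1))
    {a b : ℕ} (hab : a ≠ b) : Disjoint (Dset S a) (Dset S b) := by
  wlog h : a < b generalizing a b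
  · exact (this hab.symm (by omega)).symm
  rw [Finset.disjoint_left]
  intro x hxa hxb
  have h1 : x ∈ Tset S (b - 1) :=
    Tset_mono hS (show a ≤ b - 1 by omega) (Dset_subset a hxa)
  exact (Finset.mem_sdiff.mp hxb).2 h1

lemma card_Tset {S : ℕ → Finset ℝ} {n : ℕ}
    (hS_card : ∀ k, 1 ≤ k → (S k).card = n ^ k - 1) (j : ℕ) :
    (Tset S j).card = n ^ j - 1 := by
  cases j with
  | zero => simp [Tset]
  | succ j => exact hS_card (j + 1) (by omega)

lemma card_Dset {S : ℕ → Finset ℝ} {n : ℕ} (hn : 2 ≤ n)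
    (hS : ∀ k, 1 ≤ k → S k ⊆ S (k + 1))
    (hS_card : ∀ k, 1 ≤ k → (S k).card = n ^ k - 1) {j : ℕ} (hj : 1 ≤ j) :
    (Dset S j).card = (n - 1) * n ^ (j - 1) := by
  have hsub : Tset S (j - 1) ⊆ Tset S j := Tset_mono hS (by omega)
  rw [Dset, Finset.card_sdiff_of_subset hsub, card_Tset hS_card, card_Tset hS_card]
  have hpow : n ^ j = n * n ^ (j - 1) := by
    conv_lhs => rw [show j = 1 + (j - 1) by omega, pow_add, pow_one]
  have h1 : 1 ≤ n ^ (j - 1) := Nat.one_le_pow _ _ (by omega)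
  have h2 : (n - 1) * n ^ (j - 1) = n * n ^ (j - 1) - n ^ (j - 1) := by
    rw [Nat.sub_one_mul]
  omega

lemma grid_eq {S : ℕ → Finset ℝ} (hS : ∀ k, 1 ≤ k → S k ⊆ S (k + 1))
    (d μ : ℕ) (hd : 1 ≤ d) :
    smolyakGrid S d μ =
      ((Fintype.piFinset fun _ : Fin d => Finset.Icc 1 (d + μ)).filter
          fun m => ∑ k, m k ≤ d + μ).biUnion
        fun m => Fintype.piFinset fun k => Dset S (m k) := by
  ext x
  simp only [smolyakGrid, smolyakIndices, Finset.mem_biUnion, Finset.mem_filter,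
    Fintype.mem_piFinset, Finset.mem_Icc]
  constructor
  · rintro ⟨i, ⟨hi1, hi2⟩, hx⟩
    have hex : ∀ k, ∃ m, 1 ≤ m ∧ m ≤ i k ∧ x k ∈ Dset S m := by
      intro k
      refine exists_level ?_
      rw [Tset_eq (hi1 k).1]
      exact hx k
    choose m hm1 hm2 hm3 using hex
    refine ⟨m, ⟨fun k => ⟨hm1 k, le_trans (hm2 k) (hi1 k).2⟩, ?_⟩, hm3⟩
    calc ∑ k, m k ≤ ∑ k, i k := Finset.sum_le_sum fun k _ => hm2 k
    _ = d + μ := hi2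
  · rintro ⟨m, ⟨hm1, hm2⟩, hx⟩
    set k0 : Fin d := ⟨0, hd⟩ with hk0
    set v : ℕ := m k0 + (d + μ - ∑ k, m k) with hv
    have hterm : m k0 + ∑ k ∈ Finset.univ.erase k0, m k = ∑ k, m k :=
      Finset.add_sum_erase _ _ (Finset.mem_univ k0)
    have hsum : ∑ k, Function.update m k0 v k = d + μ := by
      rw [Finset.sum_update_of_mem (Finset.mem_univ k0), Finset.sdiff_singleton_eq_erase]
      omega
    refine ⟨Function.update m k0 v, ⟨fun k => ?_, hsum⟩, fun k => ?_⟩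
    · rcases eq_or_ne k k0 with rfl | hk
      · rw [Function.update_self]
        have hp := (hm1 k0).1
        constructor <;> omega
      · rw [Function.update_of_ne hk]
        exact hm1 k
    · have hmle : m k ≤ Function.update m k0 v k := by
        rcases eq_or_ne k k0 with rfl | hk
        · rw [Function.update_self]; omega
        · rw [Function.update_of_ne hk]
      have h1 : 1 ≤ Function.update m k0 v k := le_trans (hm1 k).1 hmle
      rw [← Tset_eq (S := S) h1]
      exact Tset_mono hS hmle (Dset_subset _ (hx k))

theorem smolyakCard_of_pow_sub_one
    (n : ℕ) (hn : 2 ≤ n)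
    (S : ℕ → Finset ℝ) (hS_nested : ∀ k, 1 ≤ k → S k ⊆ S (k + 1))
    (hS_card : ∀ k, 1 ≤ k → (S k).card = n ^ k - 1)
    (d μ : ℕ) (hd : 1 ≤ d) :
    smolyakCard S d μ =
      (n - 1) ^ d * ∑ k ∈ Finset.range (μ + 1), (d + k - 1).choose k * n ^ k := by
  classical
  set good : Finset (Fin d → ℕ) :=
    (Fintype.piFinset fun _ : Fin d => Finset.Icc 1 (d + μ)).filter
      fun m => ∑ k, m k ≤ d + μ with hgood_def
  have hmem_good : ∀ m : Fin d → ℕ, m ∈ good ↔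
      (∀ k, 1 ≤ m k ∧ m k ≤ d + μ) ∧ ∑ k, m k ≤ d + μ := by
    intro m
    simp [hgood_def, Fintype.mem_piFinset, Finset.mem_Icc, forall_and]
  have hdisj : ∀ m ∈ good, ∀ m' ∈ good, m ≠ m' →
      Disjoint (Fintype.piFinset fun k => Dset S (m k))
        (Fintype.piFinset fun k => Dset S (m' k)) := by
    intro m _ m' _ hne
    obtain ⟨k, hk⟩ := Function.ne_iff.mp hne
    rw [Finset.disjoint_left]
    intro x hx hx'
    exact (Finset.disjoint_left.mp (Dset_disjoint hS_nested hk))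
      (Fintype.mem_piFinset.mp hx k) (Fintype.mem_piFinset.mp hx' k)
  rw [smolyakCard, grid_eq hS_nested d μ hd, ← hgood_def, Finset.card_biUnion hdisj]
  have hterm : ∀ m ∈ good,
      (Fintype.piFinset fun k => Dset S (m k)).card
        = (n - 1) ^ d * n ^ (∑ k, (m k - 1)) := by
    intro m hm
    have hm1 : ∀ k, 1 ≤ m k := fun k => ((hmem_good m).mp hm).1 k |>.1
    rw [Fintype.card_piFinset]
    calc ∏ k, (Dset S (m k)).card
        = ∏ k : Fin d, ((n - 1) * n ^ (m k - 1)) :=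
          Finset.prod_congr rfl fun k _ => card_Dset hn hS_nested hS_card (hm1 k)
      _ = (∏ _k : Fin d, (n - 1)) * ∏ k : Fin d, n ^ (m k - 1) := Finset.prod_mul_distrib
      _ = (n - 1) ^ d * n ^ (∑ k, (m k - 1)) := by
          rw [Finset.prod_const, Finset.card_univ, Fintype.card_fin,
            Finset.prod_pow_eq_pow_sum]
  rw [Finset.sum_congr rfl hterm]
  -- split `good` into fibers by the total degree
  have hgoodsplit : good = (Finset.range (μ + 1)).biUnion
      fun k => good.filter fun m => ∑ j, m j = d + k := by
    ext m
    simp only [Finset.mem_biUnion, Finset.mem_range, Finset.mem_filter]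
    constructor
    · intro hm
      have h1 := (hmem_good m).mp hm
      have hd_le : d ≤ ∑ j, m j := by
        calc d = ∑ _j : Fin d, 1 := by simp
        _ ≤ ∑ j, m j := Finset.sum_le_sum fun j _ => (h1.1 j).1
      exact ⟨∑ j, m j - d, by omega, hm, by omega⟩
    · rintro ⟨k, _, hm, _⟩; exact hm
  have hfibdisj : Set.PairwiseDisjoint ↑(Finset.range (μ + 1))
      (fun k => good.filter fun m => ∑ j, m j = d + k) := by
    intro a _ b _ hab
    simp only [Function.onFun]
    rw [Finset.disjoint_left]
    intro m hm hm'
    have h1 := (Finset.mem_filter.mp hm).2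
    have h2 := (Finset.mem_filter.mp hm').2
    omega
  rw [hgoodsplit, Finset.sum_biUnion hfibdisj]
  have hfiber : ∀ k ∈ Finset.range (μ + 1),
      ∑ m ∈ good.filter (fun m => ∑ j, m j = d + k), (n - 1) ^ d * n ^ (∑ j, (m j - 1))
        = (d + k - 1).choose k * ((n - 1) ^ d * n ^ k) := by
    intro k hk
    have hk' : k ≤ μ := by simpa using Nat.lt_succ_iff.mp (Finset.mem_range.mp hk)
    have hconst : ∀ m ∈ good.filter (fun m => ∑ j, m j = d + k),
        (n - 1) ^ d * n ^ (∑ j, (m j - 1)) = (n - 1) ^ d * n ^ k := by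
      intro m hm
      obtain ⟨hmg, hms⟩ := Finset.mem_filter.mp hm
      have hm1 : ∀ j, 1 ≤ m j := fun j => ((hmem_good m).mp hmg).1 j |>.1
      have hsplit : ∑ j, (m j - 1) + d = ∑ j, m j := by
        calc ∑ j, (m j - 1) + d = ∑ j, (m j - 1) + ∑ _j : Fin d, 1 := by simp
        _ = ∑ j, ((m j - 1) + 1) := (Finset.sum_add_distrib).symm
        _ = ∑ j, m j := Finset.sum_congr rfl fun j _ => by have := hm1 j; omega
      have : ∑ j, (m j - 1) = k := by omega
      rw [this]
    rw [Finset.sum_congr rfl hconst, Finset.sum_const, smul_eq_mul]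
    congr 1
    -- count the fiber
    have : (good.filter fun m => ∑ j, m j = d + k).card
        = (Finset.Nat.antidiagonalTuple d k).card := by
      refine Finset.card_nbij' (fun m j => m j - 1) (fun a j => a j + 1) ?_ ?_ ?_ ?_
      · intro m hm
        obtain ⟨hmg, hms⟩ := Finset.mem_filter.mp hm
        have hm1 : ∀ j, 1 ≤ m j := fun j => ((hmem_good m).mp hmg).1 j |>.1
        rw [Finset.mem_coe, Finset.Nat.mem_antidiagonalTuple]
        have hsplit : ∑ j, (m j - 1) + d = ∑ j, m j := by
          calc ∑ j, (m j - 1) + d = ∑ j, (m j - 1) + ∑ _j : Fin d, 1 := by simp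
          _ = ∑ j, ((m j - 1) + 1) := (Finset.sum_add_distrib).symm
          _ = ∑ j, m j := Finset.sum_congr rfl fun j _ => by have := hm1 j; omega
        beta_reduce
        omega
      · intro a ha
        rw [Finset.mem_coe, Finset.Nat.mem_antidiagonalTuple] at ha
        have hsum : ∑ j, (a j + 1) = d + k := by
          rw [Finset.sum_add_distrib, ha]
          simp [add_comm]
        have hle : ∀ j, a j ≤ k := fun j => by
          calc a j ≤ ∑ i, a i := Finset.single_le_sum (fun i _ => Nat.zero_le _) (Finset.mem_univ j)
          _ = k := ha
        rw [Finset.mem_coe, Finset.mem_filter, hmem_good]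
        beta_reduce
        refine ⟨⟨fun j => ⟨by omega, by have := hle j; omega⟩, by rw [hsum]; omega⟩, hsum⟩
      · intro m hm
        obtain ⟨hmg, _⟩ := Finset.mem_filter.mp hm
        have hm1 : ∀ j, 1 ≤ m j := fun j => ((hmem_good m).mp hmg).1 j |>.1
        funext j
        beta_reduce
        have := hm1 j
        omega
      · intro a _
        funext j
        beta_reduce
        omega
    rw [this, aux_card_AT]
  rw [Finset.sum_congr rfl hfiber, Finset.mul_sum]
  exact Finset.sum_congr rfl fun k _ => by ring
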